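/- Let n and f be natural numbers with f+1 ≤ n, let v : Fin n → ℕ, let B ⊆ Fin n with |B| ≤ f, and let lst be the (f+1)-st minimum of v, i.e., the entry at position f (0-indexed) of the nondecreasing rearrangement of v. Then there exists an index i ∉ B with v i ≤ lst; that is, the (f+1)-st minimum of the version vector is an upper bound on the reported clock value of at least one correct replica, even when up to f entries are controlled by Byzantine replicas. -/

import Mathlib

/-- The `(f+1)`-st minimum `lst` of a vector `v` of `n ≥ f+1` clock values
(the entry at 0-indexed position `f` of the nondecreasing rearrangement of
`v`) upper-bounds the value of at least one correct replica, even when up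
to `f` of the entries are controlled by Byzantine replicas `B`. -/
theorem fst_plus_one_minimum_bounds_correct (n f : ℕ) (hfn : f + 1 ≤ n)
    (v : Fin n → ℕ) (B : Finset (Fin n)) (hB : B.card ≤ f) (lst : ℕ)
    (hlst : lst = ((List.ofFn v).mergeSort (fun a b => a ≤ b)).getD f 0) :
    ∃ i : Fin n, i ∉ B ∧ v i ≤ lst := by
  classical
  set l := (List.ofFn v).mergeSort (fun a b => a ≤ b) with hl
  have hperm : l.Perm (List.ofFn v) := List.mergeSort_perm _ _
  have hlen : l.length = n := by rw [hperm.length_eq]; simp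
  have hsorted : l.Pairwise (· ≤ ·) := List.pairwise_mergeSort' _ _
  have hf : f < l.length := by omega
  have hget : l[f] = lst := by
    rw [hlst, List.getD_eq_getElem _ _ hf]
  have hj : ∀ j (hjl : j < l.length), j ≤ f → l[j] ≤ lst := by
    intro j hjl hjf
    rcases eq_or_lt_of_le hjf with h | h
    · subst h; exact hget.le
    · calc l[j] ≤ l[f] := hsorted.rel_get_of_le (by simpa using h.le)
        _ = lst := hget
  have htake : (l.take (f+1)).countP (fun a => a ≤ lst) = f + 1 := by
    rw [List.countP_eq_length.mpr, List.length_take]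
    · omega
    · intro a ha
      obtain ⟨j, hjl, rfl⟩ := List.mem_iff_getElem.mp ha
      simp only [List.getElem_take]
      simp only [List.length_take, lt_min_iff] at hjl
      simpa using hj j (by omega) (by omega)
  have hcount : f + 1 ≤ l.countP (fun a => a ≤ lst) := by
    calc f + 1 = (l.take (f+1)).countP (fun a => a ≤ lst) := htake.symm
      _ ≤ l.countP (fun a => a ≤ lst) := (List.take_sublist _ _).countP_le
  have hcard : f + 1 ≤ (Finset.univ.filter (fun i => v i ≤ lst)).card := by
    have h1 : (List.ofFn v).countP (fun a => a ≤ lst)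
        = (Finset.univ.filter (fun i => v i ≤ lst)).card := by
      rw [List.ofFn_eq_map, List.countP_map, List.countP_eq_length_filter,
        ← List.toFinset_card_of_nodup ((List.nodup_finRange n).filter _),
        List.toFinset_filter, List.toFinset_finRange]
      simp
    rw [← h1, ← hperm.countP_eq]; exact hcount
  by_contra h
  push_neg at h
  have hsub : (Finset.univ.filter (fun i => v i ≤ lst)) ⊆ B := by
    intro i hi
    simp only [Finset.mem_filter] at hi
    by_contra hib
    exact absurd hi.2 (not_le.mpr (h i hib))
  have := Finset.card_le_card hsub
  omega
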